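/- Let r, s be real with 0 < s, 2s < r, and r + 5s/3 < 1, and suppose 2(3 − s)/9 ≤ r ≤ 2/3 + s. Then the point p = ((3 + r − s)/11, 2(3 + r − s)/11) lies in the closed region D3 = {(x₁, x₂) : s ≤ x₁ ≤ r − s, r − s ≤ x₂ ≤ r} and is a fixed point of the affine map F₃, i.e. F₃(p) = p. -/
import Mathlib


/-- The affine branch of the return-time map on region 3. -/
noncomputable def F3 (r s : ℝ) (p : ℝ × ℝ) : ℝ × ℝ :=
  (1 - 4*p.2/3 + (r - s)/3, 1 - 4*p.2/3 + p.1 + (r - s)/3)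

/-- The closed region D3. -/
def D3 (r s : ℝ) : Set (ℝ × ℝ) :=
  {p | s ≤ p.1 ∧ p.1 ≤ r - s ∧ r - s ≤ p.2 ∧ p.2 ≤ r}

theorem fixed_point_in_region3 (r s : ℝ) (hs : 0 < s) (hrs : 2*s < r)
    (h1 : r + 5*s/3 < 1) (hlo : 2*(3 - s)/9 ≤ r) (hhi : r ≤ 2/3 + s) :
    ((3 + r - s)/11, 2*(3 + r - s)/11) ∈ D3 r s ∧
    F3 r s ((3 + r - s)/11, 2*(3 + r - s)/11) = ((3 + r - s)/11, 2*(3 + r - s)/11) := by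
  constructor
  · refine ⟨by nlinarith, by nlinarith, by nlinarith, by nlinarith⟩
  · simp only [F3, Prod.mk.injEq]
    constructor <;> ring
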